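/- Let 1 < p < ∞ and f(u) = |u|^p − 1 + p(1 − Re u). Then |u − 1|^p / f(u) → 1 as |u| → ∞; consequently, for every ε > 0 there exists α > 1 such that |u − 1|^p ≤ α f(u) whenever |u − 1| ≥ ε. -/

import Mathlib

open Filter Real

lemma young_pos (p : ℝ) (hp : 1 < p) (u : ℂ) (hu : u ≠ 1) :
    0 < ‖u‖ ^ p - 1 + p * (1 - u.re) := by
  set x := ‖u‖ with hx
  have hx0 : (0:ℝ) ≤ x := norm_nonneg u
  have hre : u.re ≤ x := Complex.re_le_norm u
  rcases eq_or_ne x 1 with h1 | h1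
  · have hre' : u.re < 1 := by
      rcases lt_or_eq_of_le (hre.trans_eq h1) with h | h
      · exact h
      · exfalso
        apply hu
        have hsq : x ^ 2 = u.re ^ 2 + u.im ^ 2 := by
          rw [hx, Complex.sq_norm, Complex.normSq_apply]; ring
        have him : u.im = 0 := by nlinarith [sq_nonneg u.im]
        exact Complex.ext (by simpa using h) (by simpa using him)
    have : 0 < p * (1 - u.re) := mul_pos (by linarith) (by linarith)
    rw [h1, Real.one_rpow]
    linarith
  · have hstrict : 1 + p * (x - 1) < x ^ p := by
      have := one_add_mul_self_lt_rpow_one_add (s := x - 1) (by linarith)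
        (by intro h; apply h1; linarith [sub_eq_zero.mp (h : x - 1 = 0)]) hp
      simpa using this
    have hmono : p * (1 - x) ≤ p * (1 - u.re) :=
      mul_le_mul_of_nonneg_left (by linarith) (by linarith)
    linarith

lemma young_rat_tendsto (p : ℝ) (hp : 1 < p) (a b : ℝ) :
    Tendsto (fun x : ℝ => (x ^ p + a + b * x) / x ^ p) atTop (nhds 1) := by
  have hp0 : 0 < p := by linarith
  have ha := (tendsto_rpow_neg_atTop hp0).const_mul a
  have hb : Tendsto (fun x : ℝ => x ^ (1 - p)) atTop (nhds 0) := by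
    have := tendsto_rpow_neg_atTop (y := p - 1) (by linarith)
    simpa [neg_sub] using this
  have h1 : Tendsto (fun x : ℝ => 1 + a * x ^ (-p) + b * x ^ (1 - p)) atTop (nhds 1) := by
    have := ((tendsto_const_nhds (x := (1:ℝ)) (f := atTop)).add ha).add (hb.const_mul b)
    simpa using this
  apply h1.congr'
  filter_upwards [eventually_gt_atTop 0] with x hx
  have hxp : (0:ℝ) < x ^ p := Real.rpow_pos_of_pos hx p
  rw [Real.rpow_neg hx.le, Real.rpow_sub hx, Real.rpow_one]
  field_simp

theorem young_function_asymptotics (p : ℝ) (hp : 1 < p) :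
    Tendsto (fun u : ℂ => ‖u - 1‖ ^ p /
        (‖u‖ ^ p - 1 + p * (1 - u.re)))
      (comap (fun u : ℂ => ‖u‖) atTop) (nhds 1) ∧
    ∀ ε > (0 : ℝ), ∃ α > (1 : ℝ), ∀ u : ℂ, ε ≤ ‖u - 1‖ →
      ‖u - 1‖ ^ p ≤ α * (‖u‖ ^ p - 1 + p * (1 - u.re)) := by
  have hp0 : (0:ℝ) < p := by linarith
  set F := comap (fun u : ℂ => ‖u‖) atTop with hF
  have habs : Tendsto (fun u : ℂ => ‖u‖) F atTop := tendsto_comap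
  have hev1 : ∀ᶠ u : ℂ in F, 1 ≤ ‖u‖ := habs.eventually (eventually_ge_atTop 1)
  -- ratio of abs values tends to 1
  have hB : Tendsto (fun u : ℂ => ‖u - 1‖ / ‖u‖) F (nhds 1) := by
    have hinv : Tendsto (fun x : ℝ => 1 / x) atTop (nhds 0) := by
      simpa [one_div] using tendsto_inv_atTop_zero
    have hlo : Tendsto (fun x : ℝ => 1 - 1 / x) atTop (nhds 1) := by
      simpa using (tendsto_const_nhds (x := (1:ℝ)) (f := atTop)).sub hinv
    have hhi : Tendsto (fun x : ℝ => 1 + 1 / x) atTop (nhds 1) := by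
      simpa using (tendsto_const_nhds (x := (1:ℝ)) (f := atTop)).add hinv
    refine tendsto_of_tendsto_of_tendsto_of_le_of_le' (hlo.comp habs) (hhi.comp habs) ?_ ?_
    · filter_upwards [hev1] with u hu
      have hupos : (0:ℝ) < ‖u‖ := lt_of_lt_of_le one_pos hu
      have hnum : ‖u‖ - 1 ≤ ‖u - 1‖ := by
        have := abs_norm_sub_norm_le u 1
        have h2 : |‖u‖ - ‖(1:ℂ)‖| ≤ ‖u - 1‖ := this
        rw [norm_one] at h2
        exact (le_abs_self _).trans h2
      have : (1:ℝ) - 1 / ‖u‖ = (‖u‖ - 1) / ‖u‖ := by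
        field_simp
      rw [Function.comp_apply, this]
      gcongr
    · filter_upwards [hev1] with u hu
      have hupos : (0:ℝ) < ‖u‖ := lt_of_lt_of_le one_pos hu
      have hnum : ‖u - 1‖ ≤ ‖u‖ + 1 := by
        simpa using norm_sub_le u 1
      have : (1:ℝ) + 1 / ‖u‖ = (‖u‖ + 1) / ‖u‖ := by
        field_simp
      rw [Function.comp_apply, this]
      gcongr
  have hBp : Tendsto (fun u : ℂ => (‖u - 1‖ / ‖u‖) ^ p) F (nhds 1) := by
    have hcont : ContinuousAt (fun x : ℝ => x ^ p) 1 :=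
      Real.continuousAt_rpow_const 1 p (Or.inl one_ne_zero)
    have := hcont.tendsto.comp hB
    simpa [Real.one_rpow, Function.comp_def] using this
  have hC : Tendsto
      (fun u : ℂ => (‖u‖ ^ p - 1 + p * (1 - u.re)) / ‖u‖ ^ p) F (nhds 1) := by
    refine tendsto_of_tendsto_of_tendsto_of_le_of_le'
      ((young_rat_tendsto p hp (p - 1) (-p)).comp habs)
      ((young_rat_tendsto p hp (p - 1) p).comp habs) ?_ ?_
    · filter_upwards [hev1] with u hu
      have hupos : (0:ℝ) < ‖u‖ := lt_of_lt_of_le one_pos hu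
      have hxp : (0:ℝ) < ‖u‖ ^ p := Real.rpow_pos_of_pos hupos p
      have hre : u.re ≤ ‖u‖ := Complex.re_le_norm u
      rw [Function.comp_apply]
      gcongr (?_ : ℝ) / _
      nlinarith
    · filter_upwards [hev1] with u hu
      have hupos : (0:ℝ) < ‖u‖ := lt_of_lt_of_le one_pos hu
      have hxp : (0:ℝ) < ‖u‖ ^ p := Real.rpow_pos_of_pos hupos p
      have hre : -‖u‖ ≤ u.re := neg_le_of_neg_le (by
        have := Complex.abs_re_le_norm u
        have := neg_le_of_abs_le this
        linarith)
      rw [Function.comp_apply]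
      gcongr (?_ : ℝ) / _
      nlinarith
  have h1 : Tendsto (fun u : ℂ => ‖u - 1‖ ^ p /
      (‖u‖ ^ p - 1 + p * (1 - u.re))) F (nhds 1) := by
    have hmain := hBp.div hC one_ne_zero
    rw [div_one] at hmain
    apply hmain.congr'
    filter_upwards [hev1] with u hu
    have hupos : (0:ℝ) < ‖u‖ := lt_of_lt_of_le one_pos hu
    have hxp : ‖u‖ ^ p ≠ 0 := (Real.rpow_pos_of_pos hupos p).ne'
    simp only [Pi.div_apply]
    rw [Real.div_rpow (norm_nonneg _) (norm_nonneg _),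
      div_div_div_cancel_right₀ hxp]
  refine ⟨h1, ?_⟩
  intro ε hε
  have h2 : ∀ᶠ u : ℂ in F, ‖u - 1‖ ^ p /
      (‖u‖ ^ p - 1 + p * (1 - u.re)) < 2 :=
    h1.eventually_lt_const (by norm_num)
  rw [hF, eventually_comap, eventually_atTop] at h2
  obtain ⟨R, hR⟩ := h2
  set K : Set ℂ := {u : ℂ | ε ≤ ‖u - 1‖} ∩ {u : ℂ | ‖u‖ ≤ R} with hK
  have hKclosed : IsClosed K := by
    apply IsClosed.inter
    · exact isClosed_le continuous_const
        (continuous_norm.comp (continuous_id.sub continuous_const))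
    · exact isClosed_le continuous_norm continuous_const
  have hKcpt : IsCompact K := by
    apply (isCompact_closedBall (0:ℂ) R).of_isClosed_subset hKclosed
    intro u hu
    simpa [Complex.dist_eq] using hu.2
  have hne1 : ∀ u : ℂ, ε ≤ ‖u - 1‖ → u ≠ 1 := by
    intro u hu h
    rw [h] at hu
    simp at hu
    linarith
  have hgc : ContinuousOn (fun u : ℂ => ‖u - 1‖ ^ p /
      (‖u‖ ^ p - 1 + p * (1 - u.re))) K := by
    intro u hu
    apply ContinuousAt.continuousWithinAt
    have c1 : ContinuousAt (fun u : ℂ => ‖u - 1‖ ^ p) u := by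
      exact (Real.continuousAt_rpow_const _ p (Or.inr hp0.le)).comp
        ((continuous_norm.comp (continuous_id.sub continuous_const)).continuousAt)
    have c2 : ContinuousAt (fun u : ℂ => ‖u‖ ^ p - 1 + p * (1 - u.re)) u := by
      exact (((Real.continuousAt_rpow_const _ p (Or.inr hp0.le)).comp
        continuous_norm.continuousAt).sub continuousAt_const).add
        (continuousAt_const.mul (continuousAt_const.sub Complex.continuous_re.continuousAt))
    exact c1.div c2 (young_pos p hp u (hne1 u hu.1)).ne'
  obtain ⟨C, hC⟩ := hKcpt.exists_bound_of_continuousOn hgc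
  refine ⟨max C 2, lt_of_lt_of_le one_lt_two (le_max_right _ _), ?_⟩
  intro u hu
  have hfpos := young_pos p hp u (hne1 u hu)
  have hratio : ‖u - 1‖ ^ p /
      (‖u‖ ^ p - 1 + p * (1 - u.re)) ≤ max C 2 := by
    rcases le_or_gt (‖u‖) R with hle | hlt
    · exact (le_abs_self _).trans ((hC u ⟨hu, hle⟩).trans (le_max_left _ _))
    · exact ((hR (‖u‖) hlt.le u rfl).le).trans (le_max_right _ _)
  calc ‖u - 1‖ ^ p
      = (‖u - 1‖ ^ p / (‖u‖ ^ p - 1 + p * (1 - u.re))) *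
        (‖u‖ ^ p - 1 + p * (1 - u.re)) := by field_simp
    _ ≤ max C 2 * (‖u‖ ^ p - 1 + p * (1 - u.re)) := by
        exact mul_le_mul_of_nonneg_right hratio hfpos.le
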